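/- (Long-time stability of the regularized gradient flow) Let M ∈ ℝ^{r×r} be fixed, β > 0, and let S : [0,∞) → ℝ^{r×r} be a differentiable solution of Ṡ(t) + β∇R(S(t)) + S(t) = M (on the set where R(S(t)) > 0). Then for all t ≥ 0: (1/2)‖S(t)−M‖_F² + 2β∫₀ᵗ e^{τ−t} R(S(τ)) dτ ≤ (1/2)e^{−t}‖S(0)−M‖_F² + 2(1−e^{−t})β(1+2β)‖M‖_F². -/

import Mathlib

open Matrix BigOperators

noncomputable def frob {m n : ℕ} (A : Matrix (Fin m) (Fin n) ℝ) : ℝ :=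
  Real.sqrt (∑ i, ∑ j, (A i j) ^ 2)

noncomputable def finner {m n : ℕ} (A B : Matrix (Fin m) (Fin n) ℝ) : ℝ :=
  (Bᵀ * A).trace

noncomputable def Rreg {r : ℕ} (S : Matrix (Fin r) (Fin r) ℝ) : ℝ :=
  frob (Sᵀ * S - ((frob S) ^ 2 / (r : ℝ)) • 1)

noncomputable def sv {r : ℕ} (S : Matrix (Fin r) (Fin r) ℝ) (i : Fin r) : ℝ :=
  Real.sqrt ((Matrix.isHermitian_conjTranspose_mul_self S : (Sᵀ * S).IsHermitian).eigenvalues i)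

noncomputable def gradR {r : ℕ} (S : Matrix (Fin r) (Fin r) ℝ) : Matrix (Fin r) (Fin r) ℝ :=
  (2 / Rreg S) • (S * (Sᵀ * S - ((frob S) ^ 2 / (r : ℝ)) • 1))

attribute [local instance] Matrix.frobeniusNormedAddCommGroup Matrix.frobeniusNormedSpace


lemma frob_nonneg {m n : ℕ} (A : Matrix (Fin m) (Fin n) ℝ) : 0 ≤ frob A := Real.sqrt_nonneg _

lemma frob_sq {m n : ℕ} (A : Matrix (Fin m) (Fin n) ℝ) :
    frob A ^ 2 = ∑ i, ∑ j, (A i j) ^ 2 :=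
  Real.sq_sqrt (by positivity)

lemma frob_eq_norm {m n : ℕ} (A : Matrix (Fin m) (Fin n) ℝ) : frob A = ‖A‖ := by
  rw [Matrix.frobenius_norm_def, frob, Real.sqrt_eq_rpow]
  congr 1
  refine Finset.sum_congr rfl fun i _ => Finset.sum_congr rfl fun j _ => ?_
  rw [Real.norm_eq_abs, Real.rpow_two, sq_abs]

lemma frob_mul_le {r : ℕ} (A B : Matrix (Fin r) (Fin r) ℝ) : frob (A * B) ≤ frob A * frob B := by
  rw [frob_eq_norm, frob_eq_norm, frob_eq_norm]
  exact Matrix.frobenius_norm_mul A B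

lemma frob_tri {m n : ℕ} (A B : Matrix (Fin m) (Fin n) ℝ) : frob A ≤ frob (A - B) + frob B := by
  rw [frob_eq_norm, frob_eq_norm, frob_eq_norm]
  calc ‖A‖ = ‖A - B + B‖ := by rw [sub_add_cancel]
    _ ≤ ‖A - B‖ + ‖B‖ := norm_add_le _ _

lemma cs_sum {m n : ℕ} (A B : Matrix (Fin m) (Fin n) ℝ) :
    ∑ i, ∑ j, A i j * B i j ≤ frob A * frob B := by
  have h := Finset.sum_mul_sq_le_sq_mul_sq Finset.univ
    (fun p : Fin m × Fin n => A p.1 p.2) (fun p => B p.1 p.2)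
  have h1 : ∑ i, ∑ j, A i j * B i j = ∑ p : Fin m × Fin n, A p.1 p.2 * B p.1 p.2 := by
    rw [Fintype.sum_prod_type]
  have h2 : frob A ^ 2 = ∑ p : Fin m × Fin n, A p.1 p.2 ^ 2 := by
    rw [frob_sq, Fintype.sum_prod_type]
  have h3 : frob B ^ 2 = ∑ p : Fin m × Fin n, B p.1 p.2 ^ 2 := by
    rw [frob_sq, Fintype.sum_prod_type]
  rw [h1]
  have h' : (∑ p : Fin m × Fin n, A p.1 p.2 * B p.1 p.2) ^ 2 ≤ (frob A * frob B) ^ 2 := by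
    rw [mul_pow, h2, h3]; exact h
  nlinarith [mul_nonneg (frob_nonneg A) (frob_nonneg B)]

lemma sum_eq_trace {m n : ℕ} (A B : Matrix (Fin m) (Fin n) ℝ) :
    ∑ i, ∑ j, A i j * B i j = (Aᵀ * B).trace := by
  rw [Matrix.trace]
  simp only [Matrix.diag_apply, Matrix.mul_apply, Matrix.transpose_apply]
  exact Finset.sum_comm

lemma gradR_inner_self {r : ℕ} (hr : 0 < r) (S : Matrix (Fin r) (Fin r) ℝ)
    (hR : 0 < Rreg S) :
    ∑ i, ∑ j, gradR S i j * S i j = 2 * Rreg S := by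
  set α : ℝ := (frob S) ^ 2 / (r : ℝ) with hα
  set X : Matrix (Fin r) (Fin r) ℝ := Sᵀ * S - α • 1 with hX
  have hRX : Rreg S = frob X := rfl
  have hstep : ∑ i, ∑ j, gradR S i j * S i j = (2 / Rreg S) * ∑ i, ∑ j, (S * X) i j * S i j := by
    rw [Finset.mul_sum]
    refine Finset.sum_congr rfl fun i _ => ?_
    rw [Finset.mul_sum]
    refine Finset.sum_congr rfl fun j _ => ?_
    simp only [gradR, Matrix.smul_apply, smul_eq_mul, ← hα, ← hX]
    ring
  have htrX : X.trace = 0 := by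
    have h1 : (Sᵀ * S).trace = frob S ^ 2 := by
      rw [← sum_eq_trace, frob_sq]
      refine Finset.sum_congr rfl fun i _ => Finset.sum_congr rfl fun j _ => (sq _).symm
    have h2 : ((α • 1 : Matrix (Fin r) (Fin r) ℝ)).trace = α * r := by
      rw [Matrix.trace_smul, Matrix.trace_one, smul_eq_mul, Fintype.card_fin]
    have h3 : α * r = frob S ^ 2 := by
      rw [hα]; field_simp
    rw [hX, Matrix.trace_sub, h1, h2, h3, sub_self]
  have hXt : Xᵀ = X := by
    rw [hX]
    simp [Matrix.transpose_sub, Matrix.transpose_mul, Matrix.transpose_smul]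
  have hmain : ∑ i, ∑ j, (S * X) i j * S i j = Rreg S ^ 2 := by
    rw [sum_eq_trace, Matrix.transpose_mul, hXt]
    have hSS : Sᵀ * S = X + α • 1 := by rw [hX, sub_add_cancel]
    rw [Matrix.mul_assoc, hSS, Matrix.mul_add, Matrix.trace_add]
    have h4 : (X * (α • 1)).trace = 0 := by
      rw [Matrix.mul_smul, Matrix.mul_one, Matrix.trace_smul, htrX, smul_zero]
    have h5 : (X * X).trace = Rreg S ^ 2 := by
      rw [show X * X = Xᵀ * X from by rw [hXt], ← sum_eq_trace, hRX, frob_sq]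
      refine Finset.sum_congr rfl fun i _ => Finset.sum_congr rfl fun j _ => (sq _).symm
    rw [h4, h5, add_zero]
  rw [hstep, hmain]
  field_simp

lemma gradR_inner_le {r : ℕ} (S M : Matrix (Fin r) (Fin r) ℝ) (hR : 0 < Rreg S) :
    ∑ i, ∑ j, gradR S i j * M i j ≤ 2 * frob S * frob M := by
  set X : Matrix (Fin r) (Fin r) ℝ := Sᵀ * S - ((frob S) ^ 2 / (r : ℝ)) • 1 with hX
  have hRX : Rreg S = frob X := rfl
  have hstep : ∑ i, ∑ j, gradR S i j * M i j = (2 / Rreg S) * ∑ i, ∑ j, (S * X) i j * M i j := by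
    rw [Finset.mul_sum]
    refine Finset.sum_congr rfl fun i _ => ?_
    rw [Finset.mul_sum]
    refine Finset.sum_congr rfl fun j _ => ?_
    simp only [gradR, Matrix.smul_apply, smul_eq_mul, ← hX]
    ring
  have h1 : ∑ i, ∑ j, (S * X) i j * M i j ≤ frob (S * X) * frob M := cs_sum _ _
  have h2 : frob (S * X) ≤ frob S * frob X := frob_mul_le _ _
  have h3 : frob (S * X) * frob M ≤ frob S * frob X * frob M :=
    mul_le_mul_of_nonneg_right h2 (frob_nonneg M)
  have h4 : (0:ℝ) ≤ 2 / Rreg S := by positivity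
  calc ∑ i, ∑ j, gradR S i j * M i j
      = (2 / Rreg S) * ∑ i, ∑ j, (S * X) i j * M i j := hstep
    _ ≤ (2 / Rreg S) * (frob S * frob X * frob M) :=
        mul_le_mul_of_nonneg_left (h1.trans h3) h4
    _ = 2 * frob S * frob M := by
        rw [← hRX]; field_simp

noncomputable def entryCLM {m n : ℕ} (i : Fin m) (j : Fin n) :
    Matrix (Fin m) (Fin n) ℝ →L[ℝ] ℝ :=
  LinearMap.toContinuousLinearMap
    { toFun := fun A => A i j
      map_add' := fun _ _ => rfl
      map_smul' := fun _ _ => rfl }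

lemma entryCLM_apply {m n : ℕ} (i : Fin m) (j : Fin n) (A : Matrix (Fin m) (Fin n) ℝ) :
    entryCLM i j A = A i j := rfl

lemma continuous_entry {m n : ℕ} (i : Fin m) (j : Fin n) :
    Continuous fun A : Matrix (Fin m) (Fin n) ℝ => A i j :=
  (entryCLM i j).continuous

lemma continuous_Rreg {r : ℕ} : Continuous fun A : Matrix (Fin r) (Fin r) ℝ => Rreg A := by
  have hsq : Continuous fun A : Matrix (Fin r) (Fin r) ℝ => ∑ a, ∑ b, (A a b) ^ 2 :=
    continuous_finset_sum _ fun a _ =>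
      continuous_finset_sum _ fun b _ => (continuous_entry a b).pow 2
  have hentry : ∀ i j : Fin r, Continuous fun A : Matrix (Fin r) (Fin r) ℝ =>
      (Aᵀ * A - ((frob A) ^ 2 / (r : ℝ)) • 1) i j := by
    intro i j
    have heq : (fun A : Matrix (Fin r) (Fin r) ℝ =>
        (Aᵀ * A - ((frob A) ^ 2 / (r : ℝ)) • 1) i j)
        = fun A => (∑ k, A k i * A k j)
          - (∑ a, ∑ b, (A a b) ^ 2) / (r : ℝ) * (1 : Matrix (Fin r) (Fin r) ℝ) i j := by
      funext A
      simp only [Matrix.sub_apply, Matrix.smul_apply, smul_eq_mul, Matrix.mul_apply,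
        Matrix.transpose_apply, frob_sq]
    rw [heq]
    exact (continuous_finset_sum _ fun k _ =>
      (continuous_entry k i).mul (continuous_entry k j)).sub
      ((hsq.div_const _).mul continuous_const)
  have heq2 : (fun A : Matrix (Fin r) (Fin r) ℝ => Rreg A)
      = fun A => Real.sqrt (∑ i, ∑ j, ((Aᵀ * A - ((frob A) ^ 2 / (r : ℝ)) • 1) i j) ^ 2) := rfl
  rw [heq2]
  exact Real.continuous_sqrt.comp (continuous_finset_sum _ fun i _ =>
    continuous_finset_sum _ fun j _ => (hentry i j).pow 2)

theorem stmt12 {r : ℕ} (β : ℝ) (hβ : 0 < β) (M : Matrix (Fin r) (Fin r) ℝ)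
    (S : ℝ → Matrix (Fin r) (Fin r) ℝ)
    (hpos : ∀ t, 0 ≤ t → 0 < Rreg (S t))
    (hode : ∀ t, 0 ≤ t → HasDerivAt S (M - S t - β • gradR (S t)) t) :
    ∀ t, 0 ≤ t →
      (1 / 2) * frob (S t - M) ^ 2
          + 2 * β * ∫ τ in (0 : ℝ)..t, Real.exp (τ - t) * Rreg (S τ)
        ≤ (1 / 2) * Real.exp (-t) * frob (S 0 - M) ^ 2
          + 2 * (1 - Real.exp (-t)) * β * (1 + 2 * β) * frob M ^ 2 := by
  intro t ht
  rcases Nat.eq_zero_or_pos r with hr0 | hr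
  · exfalso
    subst hr0
    simpa [Rreg, frob] using hpos 0 le_rfl
  set C : ℝ := 2 * β * (1 + 2 * β) * frob M ^ 2 with hC
  set D : ℝ → Matrix (Fin r) (Fin r) ℝ := fun x => M - S x - β • gradR (S x) with hD
  set φ : ℝ → ℝ := fun x => ∑ i, ∑ j, (S x i j - M i j) ^ 2 with hφ
  set ψ : ℝ → ℝ := fun x => ∑ i, ∑ j, 2 * (S x i j - M i j) * D x i j with hψ
  have hφfrob : ∀ x : ℝ, frob (S x - M) ^ 2 = φ x := by
    intro x
    rw [frob_sq]
    simp only [hφ, Matrix.sub_apply]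
  -- derivative of φ
  have hφderiv : ∀ x, 0 ≤ x → HasDerivAt φ (ψ x) x := by
    intro x hx
    have h0 := hode x hx
    have hC1 : ∀ i j : Fin r, HasDerivAt (fun y => S y i j) (D x i j) x := by
      intro i j
      have h1 := (entryCLM i j).hasFDerivAt.comp_hasDerivAt x h0
      have h2 : HasDerivAt (fun y => S y i j)
          (entryCLM i j (M - S x - β • gradR (S x))) x := h1
      rw [entryCLM_apply] at h2
      simp only [hD]
      exact h2
    simp only [hφ, hψ]
    apply HasDerivAt.fun_sum
    intro i _
    apply HasDerivAt.fun_sum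
    intro j _
    have h2 := ((hC1 i j).sub_const (M i j)).fun_pow 2
    simpa using h2
  -- continuity facts
  have hfcont : ∀ x, 0 ≤ x → ContinuousAt (fun τ => Real.exp τ * Rreg (S τ)) x := by
    intro x hx
    exact (Real.continuous_exp.continuousAt).mul
      (continuous_Rreg.continuousAt.comp (hode x hx).continuousAt)
  have hInt : ∀ x : ℝ, 0 ≤ x →
      IntervalIntegrable (fun τ => Real.exp τ * Rreg (S τ)) MeasureTheory.volume 0 x := by
    intro x hx
    apply ContinuousOn.intervalIntegrable
    rw [Set.uIcc_of_le hx]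
    exact fun τ hτ => (hfcont τ hτ.1).continuousWithinAt
  -- key differential inequality
  have hkey : ∀ x, 0 ≤ x → ψ x / 2 + φ x / 2 + 2 * β * Rreg (S x) ≤ C := by
    intro x hx
    have hRx := hpos x hx
    have hGS := gradR_inner_self hr (S x) hRx
    have hGM := gradR_inner_le (S x) M hRx
    have htri := frob_tri (S x) M
    have hφx : φ x = frob (S x - M) ^ 2 := (hφfrob x).symm
    have hid : ψ x = -2 * φ x
        - 2 * β * (∑ i, ∑ j, gradR (S x) i j * S x i j)
        + 2 * β * (∑ i, ∑ j, gradR (S x) i j * M i j) := by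
      have step1 : ψ x = ∑ i, ∑ j, ((-2) * (S x i j - M i j) ^ 2
          + ((-(2 * β)) * (gradR (S x) i j * S x i j)
            + (2 * β) * (gradR (S x) i j * M i j))) := by
        simp only [hψ, hD]
        refine Finset.sum_congr rfl fun i _ => Finset.sum_congr rfl fun j _ => ?_
        simp only [Matrix.sub_apply, Matrix.smul_apply, smul_eq_mul]
        ring
      rw [step1]
      simp only [Finset.sum_add_distrib, ← Finset.mul_sum]
      simp only [hφ]
      ring
    rw [hid, hGS]
    nlinarith [sq_nonneg (frob (S x - M) - 2 * β * frob M),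
      mul_le_mul_of_nonneg_left hGM hβ.le,
      mul_le_mul_of_nonneg_left (mul_le_mul_of_nonneg_right htri (frob_nonneg M)) hβ.le,
      frob_nonneg (S x - M), frob_nonneg M, frob_nonneg (S x),
      mul_nonneg hβ.le (frob_nonneg M)]
  -- the Gronwall function
  set F : ℝ → ℝ := fun x => Real.exp x * (φ x / 2)
      + 2 * β * (∫ τ in (0:ℝ)..x, Real.exp τ * Rreg (S τ)) - C * (Real.exp x - 1) with hF
  have hFderiv : ∀ x, 0 < x → HasDerivAt F
      (Real.exp x * (φ x / 2) + Real.exp x * (ψ x / 2)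
        + 2 * β * (Real.exp x * Rreg (S x)) - C * Real.exp x) x := by
    intro x hx
    have h1 : HasDerivAt (fun y => Real.exp y * (φ y / 2))
        (Real.exp x * (φ x / 2) + Real.exp x * (ψ x / 2)) x :=
      (Real.hasDerivAt_exp x).mul ((hφderiv x hx.le).div_const 2)
    have h2 : HasDerivAt (fun y => ∫ τ in (0:ℝ)..y, Real.exp τ * Rreg (S τ))
        (Real.exp x * Rreg (S x)) x := by
      refine intervalIntegral.integral_hasDerivAt_right (hInt x hx.le) ?_ (hfcont x hx.le)
      refine ContinuousOn.stronglyMeasurableAtFilter isOpen_Ioi ?_ x hx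
      exact fun τ hτ => (hfcont τ (le_of_lt hτ)).continuousWithinAt
    have h3 : HasDerivAt (fun y => C * (Real.exp y - 1)) (C * Real.exp x) x :=
      ((Real.hasDerivAt_exp x).sub_const 1).const_mul C
    simpa only [hF] using (h1.fun_add (h2.const_mul (2 * β))).fun_sub h3
  have hFcont : ContinuousOn F (Set.Icc 0 t) := by
    simp only [hF]
    apply ContinuousOn.sub
    apply ContinuousOn.add
    · intro x hx
      exact ((Real.continuous_exp.continuousAt).mul
        ((hφderiv x hx.1).continuousAt.div_const 2)).continuousWithinAt
    · apply ContinuousOn.mul continuousOn_const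
      have hprim := intervalIntegral.continuousOn_primitive_interval
        (μ := MeasureTheory.volume) (a := (0:ℝ)) (b := t)
        (f := fun τ => Real.exp τ * Rreg (S τ)) ?_
      · rwa [Set.uIcc_of_le ht] at hprim
      · rw [Set.uIcc_of_le ht]
        apply ContinuousOn.integrableOn_Icc
        exact fun τ hτ => (hfcont τ hτ.1).continuousWithinAt
    · exact (continuous_const.mul (Real.continuous_exp.sub continuous_const)).continuousOn
  have hanti : AntitoneOn F (Set.Icc 0 t) := by
    apply antitoneOn_of_deriv_nonpos (convex_Icc 0 t) hFcont
    · intro x hx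
      rw [interior_Icc] at hx
      exact (hFderiv x hx.1).differentiableAt.differentiableWithinAt
    · intro x hx
      rw [interior_Icc] at hx
      rw [(hFderiv x hx.1).deriv]
      have hk := hkey x hx.1.le
      nlinarith [Real.exp_pos x]
  have hFt : F t ≤ F 0 :=
    hanti (Set.left_mem_Icc.mpr ht) (Set.right_mem_Icc.mpr ht) ht
  have hF0 : F 0 = φ 0 / 2 := by
    simp [hF]
  rw [hF0] at hFt
  simp only [hF] at hFt
  -- rewrite the integral in the goal
  have hIeq : (∫ τ in (0:ℝ)..t, Real.exp (τ - t) * Rreg (S τ))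
      = Real.exp (-t) * ∫ τ in (0:ℝ)..t, Real.exp τ * Rreg (S τ) := by
    rw [← intervalIntegral.integral_const_mul]
    refine intervalIntegral.integral_congr fun τ _ => ?_
    rw [Real.exp_sub, Real.exp_neg]
    ring
  rw [hIeq, hφfrob t, hφfrob 0]
  set I : ℝ := ∫ τ in (0:ℝ)..t, Real.exp τ * Rreg (S τ) with hI
  have hae : Real.exp (-t) * Real.exp t = 1 := by
    rw [← Real.exp_add]; simp
  have hml := mul_le_mul_of_nonneg_left hFt (Real.exp_pos (-t)).le
  have hml2 : φ t / 2 + 2 * β * (Real.exp (-t) * I) - C * (1 - Real.exp (-t))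
      ≤ Real.exp (-t) * (φ 0 / 2) := by
    calc φ t / 2 + 2 * β * (Real.exp (-t) * I) - C * (1 - Real.exp (-t))
        = Real.exp (-t) * (Real.exp t * (φ t / 2) + 2 * β * I - C * (Real.exp t - 1))
          + (φ t / 2) * (1 - Real.exp (-t) * Real.exp t)
          - C * (1 - Real.exp (-t) * Real.exp t) := by ring
      _ = Real.exp (-t) * (Real.exp t * (φ t / 2) + 2 * β * I - C * (Real.exp t - 1)) := by
          rw [hae]; ring
      _ ≤ Real.exp (-t) * (φ 0 / 2) := hml
  rw [hC] at hml2
  linarith
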